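/- Let E be a directed graph, K a field, and suppose c is a cycle in E based at a vertex v (i.e., s(c) = v = r(c)) and e is an exit for c with s(e) = v. Then the left L_K(E)-module L_K(E)v decomposes as a direct sum L_K(E)v = L_K(E)cc* ⊕ L_K(E)(v - cc*), where the summand L_K(E)cc* is isomorphic to L_K(E)v as a left L_K(E)-module and the summand L_K(E)(v - cc*) is nonzero. In particular, L_K(E)v has a nontrivial direct summand isomorphic to itself. -/

import Mathlib

set_option synthInstance.maxHeartbeats 1000000
set_option maxHeartbeats 1000000

/-- Generators of the Leavitt path algebra: vertices, edges, and ghost edges. -/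
inductive LPAGen (V E : Type) : Type
  | vertex : V → LPAGen V E
  | edge : E → LPAGen V E
  | ghost : E → LPAGen V E

/-- The defining relations of the Leavitt path algebra of the graph with vertex set `V`,
edge set `E`, and source and range maps `s r : E → V`.  The (CK2) relation is imposed at
every regular vertex, i.e. every vertex emitting finitely many but at least one edge. -/
inductive LPARel (K : Type) [Field K] {V E : Type} (s r : E → V) :
    FreeAlgebra K (LPAGen V E) → FreeAlgebra K (LPAGen V E) → Prop
  | vertex_self (v : V) :
      LPARel K s r (FreeAlgebra.ι K (LPAGen.vertex v) * FreeAlgebra.ι K (LPAGen.vertex v))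
        (FreeAlgebra.ι K (LPAGen.vertex v))
  | vertex_ne {v w : V} (h : v ≠ w) :
      LPARel K s r (FreeAlgebra.ι K (LPAGen.vertex v) * FreeAlgebra.ι K (LPAGen.vertex w)) 0
  | edge_left (e : E) :
      LPARel K s r (FreeAlgebra.ι K (LPAGen.vertex (s e)) * FreeAlgebra.ι K (LPAGen.edge e))
        (FreeAlgebra.ι K (LPAGen.edge e))
  | edge_right (e : E) :
      LPARel K s r (FreeAlgebra.ι K (LPAGen.edge e) * FreeAlgebra.ι K (LPAGen.vertex (r e)))
        (FreeAlgebra.ι K (LPAGen.edge e))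
  | ghost_left (e : E) :
      LPARel K s r (FreeAlgebra.ι K (LPAGen.vertex (r e)) * FreeAlgebra.ι K (LPAGen.ghost e))
        (FreeAlgebra.ι K (LPAGen.ghost e))
  | ghost_right (e : E) :
      LPARel K s r (FreeAlgebra.ι K (LPAGen.ghost e) * FreeAlgebra.ι K (LPAGen.vertex (s e)))
        (FreeAlgebra.ι K (LPAGen.ghost e))
  | ck1_self (e : E) :
      LPARel K s r (FreeAlgebra.ι K (LPAGen.ghost e) * FreeAlgebra.ι K (LPAGen.edge e))
        (FreeAlgebra.ι K (LPAGen.vertex (r e)))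
  | ck1_ne {e f : E} (h : e ≠ f) :
      LPARel K s r (FreeAlgebra.ι K (LPAGen.ghost e) * FreeAlgebra.ι K (LPAGen.edge f)) 0
  | ck2 (v : V) (h : {e : E | s e = v}.Finite) (hne : {e : E | s e = v}.Nonempty) :
      LPARel K s r (FreeAlgebra.ι K (LPAGen.vertex v))
        (h.toFinset.sum fun e => FreeAlgebra.ι K (LPAGen.edge e) * FreeAlgebra.ι K (LPAGen.ghost e))

/-- The unital algebra presented by the Leavitt path algebra generators and relations
(for a graph with possibly infinitely many vertices this is the unitalization of the
Leavitt path algebra; the honest Leavitt path algebra is the non-unital subalgebra `lpa`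
generated by the generators, defined below). -/
abbrev LPAU (K : Type) [Field K] {V E : Type} (s r : E → V) : Type :=
  RingQuot (LPARel K s r)

variable (K : Type) [Field K] {V E : Type} (s r : E → V)

/-- The canonical image of a generator. -/
def gen (g : LPAGen V E) : LPAU K s r :=
  RingQuot.mkAlgHom K (LPARel K s r) (FreeAlgebra.ι K g)

def vertexEl (v : V) : LPAU K s r := gen K s r (LPAGen.vertex v)
def edgeEl (e : E) : LPAU K s r := gen K s r (LPAGen.edge e)
def ghostEl (e : E) : LPAU K s r := gen K s r (LPAGen.ghost e)

/-- The Leavitt path algebra `L_K(E)` of an arbitrary graph, realized (honestly, i.e.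
without an adjoined unit) as the non-unital subalgebra generated by the vertices, edges
and ghost edges. -/
def lpa : NonUnitalSubalgebra K (LPAU K s r) :=
  NonUnitalAlgebra.adjoin K (Set.range (gen K s r))

def vertexIn (v : V) : ↥(lpa K s r) :=
  ⟨vertexEl K s r v, NonUnitalAlgebra.subset_adjoin K (Set.mem_range_self _)⟩

def edgeIn (e : E) : ↥(lpa K s r) :=
  ⟨edgeEl K s r e, NonUnitalAlgebra.subset_adjoin K (Set.mem_range_self _)⟩

def ghostIn (e : E) : ↥(lpa K s r) :=
  ⟨ghostEl K s r e, NonUnitalAlgebra.subset_adjoin K (Set.mem_range_self _)⟩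

instance lpaNonUnitalRing : NonUnitalRing ↥(lpa K s r) := inferInstance
instance lpaAddCommGroup : AddCommGroup ↥(lpa K s r) := inferInstance
instance lpaModule : Module K ↥(lpa K s r) := inferInstance

/-- The element `v · e₁ e₂ ⋯ eₙ` of the algebra corresponding to a path starting at `v`
with edge list `es` (for the empty path this is the vertex `v` itself). -/
def pathEl (v : V) (es : List E) : LPAU K s r :=
  vertexEl K s r v * (es.map (edgeEl K s r)).prod

/-- The element `eₙ* ⋯ e₂* e₁* · v` corresponding to the ghost path `α*` of the path `α`
starting at `v` with edge list `es`. -/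
def ghostPathEl (v : V) (es : List E) : LPAU K s r :=
  (es.reverse.map (ghostEl K s r)).prod * vertexEl K s r v

/-- Paths in a directed graph: `IsPathFrom s r v w es` means the list of edges `es` is a
directed path from `v` to `w` (each vertex is a path of length `0`). -/
inductive IsPathFrom {V E : Type} (s r : E → V) : V → V → List E → Prop
  | nil (v : V) : IsPathFrom s r v v []
  | cons (e : E) {w : V} {es : List E} :
      IsPathFrom s r (r e) w es → IsPathFrom s r (s e) w (e :: es)

/-- `v ≥ w` : there is a path from `v` to `w`. -/
def Geq {V E : Type} (s r : E → V) (v w : V) : Prop :=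
  ∃ es : List E, IsPathFrom s r v w es

/-- A cycle based at `v` : a nonempty closed path whose source vertices are pairwise
distinct. -/
def IsCycle {V E : Type} (s r : E → V) (v : V) (es : List E) : Prop :=
  es ≠ [] ∧ IsPathFrom s r v v es ∧ (es.map s).Nodup

/-- A path (given by its list of edges) has an exit. -/
def HasExit {V E : Type} (s : E → V) (es : List E) : Prop :=
  ∃ f : E, ∃ e ∈ es, s f = s e ∧ f ≠ e

/-- A set of vertices is hereditary. -/
def Hereditary {V E : Type} (s r : E → V) (X : Set V) : Prop :=
  ∀ v ∈ X, ∀ w : V, Geq s r v w → w ∈ X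

/-- A set of vertices is saturated. -/
def Saturated {V E : Type} (s r : E → V) (X : Set V) : Prop :=
  ∀ v : V, {e : E | s e = v}.Finite → {e : E | s e = v}.Nonempty →
    (∀ e : E, s e = v → r e ∈ X) → v ∈ X


section Aux
variable {K : Type} [Field K] {V E : Type} {s r : E → V}

local notation "A" => LPAU K s r
local notation "Vx" => vertexEl K s r
local notation "Ed" => edgeEl K s r
local notation "Gh" => ghostEl K s r

lemma rel_eq {x y : FreeAlgebra K (LPAGen V E)} (h : LPARel K s r x y) :
    RingQuot.mkAlgHom K (LPARel K s r) x = RingQuot.mkAlgHom K (LPARel K s r) y :=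
  RingQuot.mkAlgHom_rel K h

lemma vv (v : V) : Vx v * Vx v = Vx v := by
  simpa [vertexEl, gen, map_mul] using rel_eq (LPARel.vertex_self (K := K) (s := s) (r := r) v)

lemma ve (e : E) : Vx (s e) * Ed e = Ed e := by
  simpa [vertexEl, edgeEl, gen, map_mul] using rel_eq (LPARel.edge_left (K := K) (s := s) (r := r) e)

lemma ev (e : E) : Ed e * Vx (r e) = Ed e := by
  simpa [vertexEl, edgeEl, gen, map_mul] using rel_eq (LPARel.edge_right (K := K) (s := s) (r := r) e)

lemma vg (e : E) : Vx (r e) * Gh e = Gh e := by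
  simpa [vertexEl, ghostEl, gen, map_mul] using rel_eq (LPARel.ghost_left (K := K) (s := s) (r := r) e)

lemma gv (e : E) : Gh e * Vx (s e) = Gh e := by
  simpa [vertexEl, ghostEl, gen, map_mul] using rel_eq (LPARel.ghost_right (K := K) (s := s) (r := r) e)

lemma ck1 (e : E) : Gh e * Ed e = Vx (r e) := by
  simpa [vertexEl, edgeEl, ghostEl, gen, map_mul] using rel_eq (LPARel.ck1_self (K := K) (s := s) (r := r) e)

end Aux

section Aux2
variable {K : Type} [Field K] {V E : Type} {s r : E → V}

local notation "A" => LPAU K s r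
local notation "Vx" => vertexEl K s r
local notation "Ed" => edgeEl K s r
local notation "Gh" => ghostEl K s r

lemma vv' (v : V) (x : A) : Vx v * (Vx v * x) = Vx v * x := by rw [← mul_assoc, vv]
lemma ve' (e : E) (x : A) : Vx (s e) * (Ed e * x) = Ed e * x := by rw [← mul_assoc, ve]
lemma ev' (e : E) (x : A) : Ed e * (Vx (r e) * x) = Ed e * x := by rw [← mul_assoc, ev]
lemma vg' (e : E) (x : A) : Vx (r e) * (Gh e * x) = Gh e * x := by rw [← mul_assoc, vg]
lemma gv' (e : E) (x : A) : Gh e * (Vx (s e) * x) = Gh e * x := by rw [← mul_assoc, gv]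
lemma ck1' (e : E) (x : A) : Gh e * (Ed e * x) = Vx (r e) * x := by rw [← mul_assoc, ck1]

lemma prodE_v {v w : V} {es : List E} (h : IsPathFrom s r v w es) :
    (es.map Ed).prod * Vx w = Vx v * (es.map Ed).prod := by
  induction h with
  | nil v => simp
  | cons e h ih =>
    simp only [List.map_cons, List.prod_cons, mul_assoc, ih, ve', ev']

lemma v_prodG {v w : V} {es : List E} (h : IsPathFrom s r v w es) :
    Vx w * (es.reverse.map Gh).prod = (es.reverse.map Gh).prod * Vx v := by
  induction h with
  | nil v => simp [vv]
  | cons e h ih =>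
    simp only [List.reverse_cons, List.map_append, List.prod_append, List.map_cons,
      List.prod_cons, List.map_nil, List.prod_nil, mul_one, ← mul_assoc, ih]
    rw [mul_assoc _ (Vx (r e)) (Gh e), vg, mul_assoc, gv]

lemma prodG_v_prodE {v w : V} {es : List E} (h : IsPathFrom s r v w es) :
    (es.reverse.map Gh).prod * (Vx v * (es.map Ed).prod) = Vx w := by
  induction h with
  | nil v => simp [vv]
  | cons e h ih =>
    simp only [List.reverse_cons, List.map_append, List.prod_append, List.map_cons,
      List.prod_cons, List.map_nil, List.prod_nil, mul_one, mul_assoc]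
    rw [gv', ck1', ← mul_assoc, mul_assoc, ih]

lemma ghost_mul_path {v w : V} {es : List E} (h : IsPathFrom s r v w es) :
    ghostPathEl K s r v es * pathEl K s r v es = Vx w := by
  unfold ghostPathEl pathEl
  rw [mul_assoc, vv', prodG_v_prodE h]

lemma path_mul_v {v w : V} {es : List E} (h : IsPathFrom s r v w es) :
    pathEl K s r v es * Vx w = pathEl K s r v es := by
  unfold pathEl
  rw [mul_assoc, prodE_v h, vv']

lemma v_mul_ghost {v w : V} {es : List E} (h : IsPathFrom s r v w es) :
    Vx w * ghostPathEl K s r v es = ghostPathEl K s r v es := by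
  unfold ghostPathEl
  rw [← mul_assoc, v_prodG h, mul_assoc, vv]

end Aux2

section BPSec
variable {V E : Type}

/-- A vertex is singular if CK2 is not imposed at it. -/
def Sing (s : E → V) (w : V) : Prop :=
  ¬ ({e : E | s e = w}.Finite ∧ {e : E | s e = w}.Nonempty)

structure FinBP (s r : E → V) where
  v : V
  w : V
  es : List E
  path : IsPathFrom s r v w es
  sing : Sing s w

structure InfBP (s r : E → V) where
  p : ℕ → E
  hp : ∀ n, s (p (n + 1)) = r (p n)

lemma FinBP.ext' {s r : E → V} {a b : FinBP s r} (h1 : a.v = b.v) (h2 : a.w = b.w)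
    (h3 : a.es = b.es) : a = b := by
  cases a; cases b; cases h1; cases h2; cases h3; rfl

lemma InfBP.ext' {s r : E → V} {a b : InfBP s r} (h : a.p = b.p) : a = b := by
  cases a; cases b; cases h; rfl

def BP (s r : E → V) : Type := FinBP s r ⊕ InfBP s r

variable {s r : E → V}

def BP.src : BP s r → V
  | .inl x => x.v
  | .inr x => s (x.p 0)

def consFun (e : E) (p : ℕ → E) : ℕ → E
  | 0 => e
  | n + 1 => p n

def BP.cons (e : E) : (x : BP s r) → BP.src x = r e → BP s r
  | .inl ⟨v, w, es, path, sing⟩, h =>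
      .inl ⟨s e, w, e :: es, IsPathFrom.cons e (h ▸ path), sing⟩
  | .inr ⟨p, hp⟩, h =>
      .inr ⟨consFun e p, fun n => by
        cases n with
        | zero => exact h
        | succ n => exact hp n⟩

def BP.decons : BP s r → Option (E × BP s r)
  | .inl ⟨_, _, [], _, _⟩ => none
  | .inl ⟨_, w, e :: es, path, sing⟩ =>
      some (e, .inl ⟨r e, w, es, by cases path with | cons _ h => exact h, sing⟩)
  | .inr ⟨p, hp⟩ => some (p 0, .inr ⟨fun n => p (n + 1), fun n => hp (n + 1)⟩)

lemma BP.src_cons (e : E) (x : BP s r) (h : BP.src x = r e) :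
    BP.src (BP.cons e x h) = s e := by
  rcases x with ⟨v, w, es, path, sing⟩ | ⟨p, hp⟩ <;> rfl

lemma BP.decons_cons (e : E) (x : BP s r) (h : BP.src x = r e) :
    BP.decons (BP.cons e x h) = some (e, x) := by
  rcases x with ⟨v, w, es, path, sing⟩ | ⟨p, hp⟩
  · have h' : v = r e := h
    subst h'
    rfl
  · rfl

lemma BP.decons_src {x : BP s r} {e : E} {y : BP s r} (h : BP.decons x = some (e, y)) :
    BP.src x = s e := by
  rcases x with ⟨v, w, es, path, sing⟩ | ⟨p, hp⟩
  · cases path with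
    | nil => exact absurd h (by simp [BP.decons])
    | cons e' hpath =>
      simp only [BP.decons, Option.some.injEq, Prod.mk.injEq] at h
      rw [show BP.src (Sum.inl ⟨s e', w, _, _, sing⟩ : BP s r) = s e' from rfl, (Prod.mk.inj h).1]
  · simp only [BP.decons, Option.some.injEq, Prod.mk.injEq] at h
    rw [show BP.src (Sum.inr ⟨p, hp⟩ : BP s r) = s (p 0) from rfl, (Prod.mk.inj h).1]

lemma BP.decons_src' {x : BP s r} {e : E} {y : BP s r} (h : BP.decons x = some (e, y)) :
    BP.src y = r e := by
  rcases x with ⟨v, w, es, path, sing⟩ | ⟨p, hp⟩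
  · cases path with
    | nil => exact absurd h (by simp [BP.decons])
    | cons e' hpath =>
      simp only [BP.decons, Option.some.injEq, Prod.mk.injEq] at h
      rw [← (Prod.mk.inj h).2, ← (Prod.mk.inj h).1]
      rfl
  · simp only [BP.decons, Option.some.injEq, Prod.mk.injEq] at h
    rw [← (Prod.mk.inj h).2, ← (Prod.mk.inj h).1]
    show s (p 1) = r (p 0)
    exact hp 0

lemma BP.cons_decons {x : BP s r} {e : E} {y : BP s r} (h : BP.decons x = some (e, y))
    (h' : BP.src y = r e) : BP.cons e y h' = x := by
  rcases x with ⟨v, w, es, path, sing⟩ | ⟨p, hp⟩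
  · cases path with
    | nil => exact absurd h (by simp [BP.decons])
    | cons e' hpath =>
      simp only [BP.decons, Option.some.injEq, Prod.mk.injEq] at h
      obtain ⟨he, hy⟩ := Prod.mk.inj h
      subst hy; cases he
      exact congrArg Sum.inl (FinBP.ext' rfl rfl rfl)
  · simp only [BP.decons, Option.some.injEq, Prod.mk.injEq] at h
    obtain ⟨he, hy⟩ := Prod.mk.inj h
    subst hy; cases he
    refine congrArg Sum.inr (InfBP.ext' ?_)
    funext n
    cases n <;> rfl

lemma BP.decons_none {x : BP s r} (h : BP.decons x = none) : Sing s (BP.src x) := by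
  rcases x with ⟨v, w, es, path, sing⟩ | ⟨p, hp⟩
  · cases path with
    | nil => exact sing
    | cons e' hpath => exact absurd h (by simp [BP.decons])
  · exact absurd h (by simp [BP.decons])

lemma exists_bp (w : V) : ∃ x : BP s r, BP.src x = w := by
  classical
  set S : Set V := {u | ∃ z es, IsPathFrom s r u z es ∧ Sing s z} with hS
  by_cases hw : w ∈ S
  · obtain ⟨z, es, hpath, hz⟩ := hw
    exact ⟨.inl ⟨w, z, es, hpath, hz⟩, rfl⟩
  · have step : ∀ u, u ∉ S → ∃ e, s e = u ∧ r e ∉ S := by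
      intro u hu
      by_contra hcon
      push_neg at hcon
      have hreg : ¬ Sing s u := fun hs => hu ⟨u, [], IsPathFrom.nil u, hs⟩
      rw [Sing, not_not] at hreg
      obtain ⟨e, he⟩ := hreg.2
      obtain ⟨z, es, hp, hz⟩ := hcon e he
      exact hu ⟨z, e :: es, he ▸ IsPathFrom.cons e hp, hz⟩
    choose g hg1 hg2 using fun u : {u : V // u ∉ S} => step u.1 u.2
    let q : ℕ → {u : V // u ∉ S} :=
      fun n => Nat.rec ⟨w, hw⟩ (fun _ u => ⟨r (g u), hg2 u⟩) n
    refine ⟨.inr ⟨fun n => g (q n), fun n => ?_⟩, ?_⟩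
    · rw [hg1]
    · show s (g (q 0)) = w
      rw [hg1]
      rfl

end BPSec

section RepSec
variable (K : Type) [Field K] {V E : Type} (s r : E → V)

open Classical in
/-- Action of the generators on boundary paths. -/
noncomputable def actF : LPAGen V E → BP s r → (BP s r →₀ K)
  | .vertex v, x => if BP.src x = v then Finsupp.single x 1 else 0
  | .edge e, x =>
      if h : BP.src x = r e then Finsupp.single (BP.cons e x h) 1 else 0
  | .ghost e, x =>
      match BP.decons x with
      | some (e', y) => if e' = e then Finsupp.single y 1 else 0
      | none => 0

noncomputable def opG (g : LPAGen V E) : (BP s r →₀ K) →ₗ[K] (BP s r →₀ K) :=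
  Finsupp.lift (BP s r →₀ K) K (BP s r) (actF K s r g)

lemma opG_single (g : LPAGen V E) (x : BP s r) (c : K) :
    opG K s r g (Finsupp.single x c) = c • actF K s r g x := by
  simp [opG, Finsupp.lift_apply, Finsupp.sum_single_index]

/-- The lift of the operators to the free algebra. -/
noncomputable def PhiF : FreeAlgebra K (LPAGen V E) →ₐ[K] Module.End K (BP s r →₀ K) :=
  FreeAlgebra.lift K (opG K s r)

lemma PhiF_rel : ∀ ⦃x y : FreeAlgebra K (LPAGen V E)⦄, LPARel K s r x y →
    PhiF K s r x = PhiF K s r y := by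
  classical
  intro x y h
  induction h with
  | vertex_self v =>
    simp only [map_mul, PhiF, FreeAlgebra.lift_ι_apply]
    refine Finsupp.lhom_ext fun x b => ?_
    by_cases h : BP.src x = v <;>
      simp [Module.End.mul_apply, opG_single, actF, h, map_smul]
  | @vertex_ne v w hvw =>
    simp only [map_mul, map_zero, PhiF, FreeAlgebra.lift_ι_apply]
    refine Finsupp.lhom_ext fun x b => ?_
    by_cases h : BP.src x = w <;>
      simp [Module.End.mul_apply, opG_single, actF, h, Ne.symm hvw, hvw, map_smul]
  | edge_left e =>
    simp only [map_mul, PhiF, FreeAlgebra.lift_ι_apply]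
    refine Finsupp.lhom_ext fun x b => ?_
    by_cases h : BP.src x = r e <;>
      simp [Module.End.mul_apply, opG_single, actF, h, map_smul, BP.src_cons]
  | edge_right e =>
    simp only [map_mul, PhiF, FreeAlgebra.lift_ι_apply]
    refine Finsupp.lhom_ext fun x b => ?_
    by_cases h : BP.src x = r e <;>
      simp [Module.End.mul_apply, opG_single, actF, h, map_smul]
  | ghost_left e =>
    simp only [map_mul, PhiF, FreeAlgebra.lift_ι_apply]
    refine Finsupp.lhom_ext fun x b => ?_
    rcases hd : BP.decons x with _ | ⟨e', y⟩
    · simp [Module.End.mul_apply, opG_single, actF, hd]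
    · by_cases he : e' = e
      · subst he
        simp [Module.End.mul_apply, opG_single, actF, hd, BP.decons_src' hd]
      · simp [Module.End.mul_apply, opG_single, actF, hd, he]
  | ghost_right e =>
    simp only [map_mul, PhiF, FreeAlgebra.lift_ι_apply]
    refine Finsupp.lhom_ext fun x b => ?_
    rcases hd : BP.decons x with _ | ⟨e', y⟩
    · by_cases h : BP.src x = s e <;>
        simp [Module.End.mul_apply, opG_single, actF, hd, h]
    · by_cases he : e' = e
      · subst he
        have hsrc : BP.src x = s e' := BP.decons_src hd
        simp [Module.End.mul_apply, opG_single, actF, hd, hsrc]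
      · by_cases h : BP.src x = s e <;>
          simp [Module.End.mul_apply, opG_single, actF, hd, he, h]
  | ck1_self e =>
    simp only [map_mul, PhiF, FreeAlgebra.lift_ι_apply]
    refine Finsupp.lhom_ext fun x b => ?_
    by_cases h : BP.src x = r e
    · simp [Module.End.mul_apply, opG_single, actF, h, BP.decons_cons, map_smul]
    · simp [Module.End.mul_apply, opG_single, actF, h]
  | @ck1_ne e f hef =>
    simp only [map_mul, map_zero, PhiF, FreeAlgebra.lift_ι_apply]
    refine Finsupp.lhom_ext fun x b => ?_
    by_cases h : BP.src x = r f <;>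
      simp [Module.End.mul_apply, opG_single, actF, h, BP.decons_cons, Ne.symm hef, hef]
  | ck2 v hfin hne =>
    simp only [map_sum, map_mul, PhiF, FreeAlgebra.lift_ι_apply]
    refine Finsupp.lhom_ext fun x b => ?_
    rw [LinearMap.coe_sum, Finset.sum_apply]
    rcases hd : BP.decons x with _ | ⟨e₀, y⟩
    · have hsing := BP.decons_none hd
      have hx : BP.src x ≠ v := fun h => hsing (h ▸ ⟨hfin, hne⟩)
      simp [Module.End.mul_apply, opG_single, actF, hd, hx]
    · have hsrc : BP.src x = s e₀ := BP.decons_src hd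
      have hy : BP.src y = r e₀ := BP.decons_src' hd
      have hterm : ∀ e ∈ hfin.toFinset,
          (opG K s r (LPAGen.edge e) * opG K s r (LPAGen.ghost e)) (Finsupp.single x b) =
            if e = e₀ then b • Finsupp.single x 1 else 0 := by
        intro e _
        by_cases he : e = e₀
        · subst he
          simp [Module.End.mul_apply, opG_single, actF, hd, hy, BP.cons_decons hd hy]
        · have he' : e₀ ≠ e := fun h => he h.symm
          simp [Module.End.mul_apply, opG_single, actF, hd, he', he]
      rw [Finset.sum_congr rfl hterm, Finset.sum_ite_eq' hfin.toFinset e₀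
        (fun _ => b • Finsupp.single x (1 : K))]
      by_cases hmem : s e₀ = v
      · simp [opG_single, actF, hsrc, hmem, Set.Finite.mem_toFinset]
      · simp [opG_single, actF, hsrc, hmem, Set.Finite.mem_toFinset]

/-- The boundary-path representation of the Leavitt path algebra. -/
noncomputable def piRep : LPAU K s r →ₐ[K] Module.End K (BP s r →₀ K) :=
  RingQuot.liftAlgHom K ⟨PhiF K s r, PhiF_rel K s r⟩

lemma piRep_gen (g : LPAGen V E) : piRep K s r (gen K s r g) = opG K s r g := by
  rw [piRep, gen, RingQuot.liftAlgHom_mkAlgHom_apply, PhiF, FreeAlgebra.lift_ι_apply]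

end RepSec

lemma pathFrom_cons {V E : Type} {s r : E → V} {a b : V} {e : E} {l : List E}
    (h : IsPathFrom s r a b (e :: l)) : a = s e ∧ IsPathFrom s r (r e) b l := by
  cases h
  exact ⟨rfl, by assumption⟩

/-- If `c` is a cycle based at a vertex `v` in a graph `E`, and `e` is an exit for `c`
with `s(e) = v`, then the left `L_K(E)`-module `L_K(E)v` decomposes as the direct sum
`L_K(E)cc* ⊕ L_K(E)(v - cc*)`, where `L_K(E)cc* ≅ L_K(E)v` as left modules and
`L_K(E)(v - cc*) ≠ 0`.  In particular `L_K(E)v` has a nontrivial direct summand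
isomorphic to itself. -/
theorem cycle_with_exit_infinite_summand (K V E : Type) [Field K] (s r : E → V)
    (v : V) (es : List E) (hcyc : IsCycle s r v es)
    (f : E) (hexit : ∃ e ∈ es, s f = s e ∧ f ≠ e) (hsf : s f = v) :
    Submodule.span (LPAU K s r) {vertexEl K s r v} =
        Submodule.span (LPAU K s r) {pathEl K s r v es * ghostPathEl K s r v es} ⊔
          Submodule.span (LPAU K s r)
            {vertexEl K s r v - pathEl K s r v es * ghostPathEl K s r v es} ∧
      Submodule.span (LPAU K s r) {pathEl K s r v es * ghostPathEl K s r v es} ⊓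
          Submodule.span (LPAU K s r)
            {vertexEl K s r v - pathEl K s r v es * ghostPathEl K s r v es} = ⊥ ∧
      Nonempty
        ((Submodule.span (LPAU K s r) {pathEl K s r v es * ghostPathEl K s r v es}) ≃ₗ[LPAU K s r]
          (Submodule.span (LPAU K s r) {vertexEl K s r v})) ∧
      Submodule.span (LPAU K s r)
          {vertexEl K s r v - pathEl K s r v es * ghostPathEl K s r v es} ≠ ⊥ := by
  obtain ⟨hne0, hpath, hnodup⟩ := hcyc
  set A := LPAU K s r
  set P := pathEl K s r v es with hP
  set Q := ghostPathEl K s r v es with hQ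
  set vEl := vertexEl K s r v with hvEl
  -- basic algebraic facts
  have hQP : Q * P = vEl := ghost_mul_path hpath
  have hPv : P * vEl = P := path_mul_v hpath
  have hvQ : vEl * Q = Q := v_mul_ghost hpath
  have hvv : vEl * vEl = vEl := vv v
  have hvP : vEl * P = P := by rw [hP, hvEl, pathEl, vv']
  have hQv : Q * vEl = Q := by rw [hQ, hvEl, ghostPathEl, mul_assoc, vv]
  have hXX : P * Q * (P * Q) = P * Q := by
    rw [mul_assoc, ← mul_assoc Q P Q, hQP, hvQ]
  have hXv : P * Q * vEl = P * Q := by rw [mul_assoc, hQv]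
  have hvX : vEl * (P * Q) = P * Q := by rw [← mul_assoc, hvP]
  -- nonvanishing of vEl - P * Q
  have hsub_ne : vEl - P * Q ≠ 0 := by
    obtain ⟨e₁, rest, rfl⟩ := List.exists_cons_of_ne_nil hne0
    have hse₁ : v = s e₁ := (pathFrom_cons hpath).1
    obtain ⟨e, hem, hsfe, hfe⟩ := hexit
    have he : e = e₁ := by
      rcases List.mem_cons.mp hem with h | h
      · exact h
      · exfalso
        have hmem : s e ∈ rest.map s := List.mem_map_of_mem (f := s) h
        rw [List.map_cons, List.nodup_cons] at hnodup
        exact hnodup.1 (by rwa [show s e₁ = s e by rw [← hse₁, ← hsf, hsfe]])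
    have hfne : f ≠ e₁ := he ▸ hfe
    obtain ⟨b, hb⟩ := exists_bp (s := s) (r := r) (r f)
    set x₀ := BP.cons f b hb with hx₀def
    have hx₀src : BP.src x₀ = v := by rw [hx₀def, BP.src_cons, hsf]
    have c1 : piRep K s r vEl (Finsupp.single x₀ (1 : K)) = Finsupp.single x₀ 1 := by
      rw [hvEl, vertexEl, piRep_gen, opG_single]
      simp [actF, hx₀src]
    have cg : piRep K s r (ghostEl K s r e₁) (Finsupp.single x₀ (1 : K)) = 0 := by
      rw [ghostEl, piRep_gen, opG_single]
      simp [actF, hx₀def, BP.decons_cons, hfne]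
    have c2 : piRep K s r (P * Q) (Finsupp.single x₀ (1 : K)) = 0 := by
      rw [map_mul, Module.End.mul_apply]
      have : piRep K s r Q (Finsupp.single x₀ (1 : K)) = 0 := by
        rw [hQ, ghostPathEl, List.reverse_cons, List.map_append, List.prod_append,
          map_mul, map_mul, Module.End.mul_apply, Module.End.mul_apply]
        rw [show piRep K s r (vertexEl K s r v) (Finsupp.single x₀ (1 : K)) =
          Finsupp.single x₀ 1 from c1]
        rw [show (List.map (ghostEl K s r) [e₁]).prod = ghostEl K s r e₁ by simp]
        rw [cg, map_zero]
      rw [this, map_zero]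
    intro h0
    have := congrArg (fun z => piRep K s r z (Finsupp.single x₀ (1 : K))) h0
    simp only [map_sub, LinearMap.sub_apply, c1, c2, sub_zero, map_zero,
      LinearMap.zero_apply] at this
    exact one_ne_zero (Finsupp.single_eq_zero.mp this)
  -- membership facts
  have hmemX : ∀ a : A, a ∈ Submodule.span A {P * Q} → a * (P * Q) = a := by
    intro a ha
    obtain ⟨c, rfl⟩ := Submodule.mem_span_singleton.mp ha
    rw [smul_eq_mul, mul_assoc, hXX]
  have hmemV : ∀ a : A, a ∈ Submodule.span A {vEl} → a * vEl = a := by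
    intro a ha
    obtain ⟨c, rfl⟩ := Submodule.mem_span_singleton.mp ha
    rw [smul_eq_mul, mul_assoc, hvv]
  have hmemW : ∀ a : A, a ∈ Submodule.span A {vEl - P * Q} → a * (P * Q) = 0 := by
    intro a ha
    obtain ⟨c, rfl⟩ := Submodule.mem_span_singleton.mp ha
    rw [smul_eq_mul, mul_assoc, sub_mul, hvX, hXX, sub_self, mul_zero]
  refine ⟨?_, ?_, ⟨?_⟩, ?_⟩
  · -- span vEl = span (P*Q) ⊔ span (vEl - P*Q)
    apply le_antisymm
    · rw [Submodule.span_le]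
      intro z hz
      rw [Set.mem_singleton_iff] at hz
      subst hz
      have hsum : P * Q + (vEl - P * Q) = vEl := by abel
      rw [SetLike.mem_coe]
      have hin := Submodule.add_mem _
        (Submodule.mem_sup_left (S := Submodule.span A {P * Q})
          (T := Submodule.span A {vEl - P * Q}) (Submodule.mem_span_singleton_self (P * Q)))
        (Submodule.mem_sup_right (S := Submodule.span A {P * Q})
          (Submodule.mem_span_singleton_self (vEl - P * Q)))
      rwa [hsum] at hin
    · apply sup_le
      · rw [Submodule.span_le, Set.singleton_subset_iff, SetLike.mem_coe]
        exact Submodule.mem_span_singleton.mpr ⟨P * Q, by rw [smul_eq_mul, hXv]⟩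
      · rw [Submodule.span_le, Set.singleton_subset_iff, SetLike.mem_coe]
        exact Submodule.mem_span_singleton.mpr
          ⟨vEl - P * Q, by rw [smul_eq_mul, sub_mul, hvv, hXv]⟩
  · -- trivial intersection
    rw [eq_bot_iff]
    intro a ha
    rw [Submodule.mem_inf] at ha
    rw [Submodule.mem_bot]
    rw [← hmemX a ha.1, hmemW a ha.2]
  · -- the isomorphism
    have memvP : ∀ a : A, a * P ∈ Submodule.span A {vEl} := fun a =>
      Submodule.mem_span_singleton.mpr ⟨a * P, by rw [smul_eq_mul, mul_assoc, hPv]⟩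
    have memxQ : ∀ a : A, a * Q ∈ Submodule.span A {P * Q} := fun a =>
      Submodule.mem_span_singleton.mpr
        ⟨a * Q, by rw [smul_eq_mul, mul_assoc, ← mul_assoc Q P Q, hQP, hvQ]⟩
    refine LinearEquiv.ofLinear
      { toFun := fun a => ⟨a.1 * P, memvP a.1⟩
        map_add' := fun a b => Subtype.ext (add_mul _ _ _)
        map_smul' := fun c a => Subtype.ext (by
          simp only [Submodule.coe_smul, smul_eq_mul, RingHom.id_apply, mul_assoc]) }
      { toFun := fun a => ⟨a.1 * Q, memxQ a.1⟩
        map_add' := fun a b => Subtype.ext (add_mul _ _ _)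
        map_smul' := fun c a => Subtype.ext (by
          simp only [Submodule.coe_smul, smul_eq_mul, RingHom.id_apply, mul_assoc]) }
      ?_ ?_
    · apply LinearMap.ext
      intro a
      apply Subtype.ext
      show a.1 * Q * P = a.1
      rw [mul_assoc, hQP]
      exact hmemV a.1 a.2
    · apply LinearMap.ext
      intro a
      apply Subtype.ext
      show a.1 * P * Q = a.1
      rw [mul_assoc]
      exact hmemX a.1 a.2
  · rw [Ne, Submodule.span_singleton_eq_bot]
    exact hsub_ne
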